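/- Let d ≥ 1 and let h_1,…,h_d ∈ S = K[t_1,…,t_s] be polynomials such that each h_i is either of the form t_k − t_l for two distinct indices k, l, or of the form t_k − 1, and such that no variable occurs in two different h_i. Let f = h_1 ⋯ h_d. Then the number of zeros of f in the affine torus is |V_T(f)| = (q−1)^s − (q−2)^d (q−1)^{s−d}. -/

import Mathlib

open MvPolynomial

/-- The affine torus `T = (K*)^s`: points of `K^s` with all coordinates nonzero. -/
abbrev Torus (s : ℕ) (K : Type) [Zero K] := {P : Fin s → K // ∀ i, P i ≠ 0}

/-- The evaluation map `f ↦ (f(P))_{P ∈ T}` as a linear map. -/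
noncomputable def evalTorus (s : ℕ) (K : Type) [Field K] :
    MvPolynomial (Fin s) K →ₗ[K] (Torus s K → K) :=
  LinearMap.pi fun P => (aeval (P.1 : Fin s → K)).toLinearMap

/-- The edge code of a hypergraph with edge set `E` on vertex set `{1,…,s}`:
the image under evaluation of the span of the squarefree monomials `∏_{j ∈ e} t_j`. -/
noncomputable def edgeCode (s : ℕ) (K : Type) [Field K] (E : Set (Finset (Fin s))) :
    Submodule K (Torus s K → K) :=
  (Submodule.span K ((fun e : Finset (Fin s) => ∏ j ∈ e, X j) '' E)).map (evalTorus s K)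

/-- Hamming weight of a word indexed by the torus. -/
noncomputable def wt {s : ℕ} {K : Type} [Field K] (c : Torus s K → K) : ℕ :=
  {P | c P ≠ 0}.ncard

/-- Minimum distance of a linear code: the least Hamming weight of a nonzero codeword. -/
noncomputable def minDist {s : ℕ} {K : Type} [Field K] (C : Submodule K (Torus s K → K)) : ℕ :=
  sInf {w : ℕ | ∃ c ∈ C, c ≠ 0 ∧ wt c = w}


section Aux
variable {s d : ℕ} {K : Type} [Field K]

lemma memvars_sub_left {k l : Fin s} (hkl : k ≠ l) :
    k ∈ (X k - X l : MvPolynomial (Fin s) K).vars := by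
  rw [mem_vars]
  refine ⟨Finsupp.single k 1, ?_, by simp⟩
  rw [MvPolynomial.mem_support_iff]
  simp [MvPolynomial.coeff_sub, MvPolynomial.coeff_X', Finsupp.single_eq_single_iff, hkl, hkl.symm]

lemma memvars_sub_right {k l : Fin s} (hkl : k ≠ l) :
    l ∈ (X k - X l : MvPolynomial (Fin s) K).vars := by
  rw [mem_vars]
  refine ⟨Finsupp.single l 1, ?_, by simp⟩
  rw [MvPolynomial.mem_support_iff]
  simp [MvPolynomial.coeff_sub, MvPolynomial.coeff_X', Finsupp.single_eq_single_iff, hkl, hkl.symm]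

lemma memvars_sub_one (k : Fin s) :
    k ∈ (X k - 1 : MvPolynomial (Fin s) K).vars := by
  rw [mem_vars]
  refine ⟨Finsupp.single k 1, ?_, by simp⟩
  rw [MvPolynomial.mem_support_iff]
  simp [MvPolynomial.coeff_sub, MvPolynomial.coeff_X', MvPolynomial.coeff_one,
    Finsupp.single_eq_zero, eq_comm]

noncomputable def buildP (kf : Fin d → Fin s) (lf : Fin d → Option (Fin s))
    (a : Fin d → K) (b : Fin s → K) : Fin s → K :=
  fun j => if hj : ∃ i, kf i = j then
      (lf hj.choose).elim (a hj.choose) (fun l => a hj.choose * b l)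
    else b j

lemma buildP_notin {kf : Fin d → Fin s} {lf : Fin d → Option (Fin s)}
    {a : Fin d → K} {b : Fin s → K} {j : Fin s} (hj : ¬ ∃ i, kf i = j) :
    buildP kf lf a b j = b j := dif_neg hj

lemma buildP_kf {kf : Fin d → Fin s} (hinj : Function.Injective kf)
    (lf : Fin d → Option (Fin s)) (a : Fin d → K) (b : Fin s → K) (i : Fin d) :
    buildP kf lf a b (kf i) = (lf i).elim (a i) (fun l => a i * b l) := by
  have hj : ∃ i', kf i' = kf i := ⟨i, rfl⟩
  have hi : hj.choose = i := hinj hj.choose_spec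
  simp only [buildP, dif_pos hj, hi]

end Aux
/-- if `f = h_1 ⋯ h_d` where each `h_i` is of the form `t_k - t_l`
(`k ≠ l`) or `t_k - 1`, and no variable occurs in two different `h_i`, then
`|V_T(f)| = (q-1)^s - (q-2)^d (q-1)^{s-d}`. -/
theorem card_zeros_of_product_of_disjoint_binomials
    (q s d : ℕ) (hd : 1 ≤ d) (K : Type) [Field K] [Fintype K]
    (hK : Fintype.card K = q)
    (h : Fin d → MvPolynomial (Fin s) K)
    (hform : ∀ i, (∃ k l : Fin s, k ≠ l ∧ h i = X k - X l) ∨ (∃ k : Fin s, h i = X k - 1))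
    (hdisj : ∀ i j, i ≠ j → Disjoint (h i).vars (h j).vars) :
    {P : Torus s K | eval P.1 (∏ i, h i) = 0}.ncard
      = (q - 1) ^ s - (q - 2) ^ d * (q - 1) ^ (s - d) := by
  classical
  -- extract the structure data of each factor
  have hspec : ∀ i : Fin d, ∃ p : Fin s × Option (Fin s),
      (∀ l, p.2 = some l → p.1 ≠ l ∧ h i = X p.1 - X l) ∧
      (p.2 = none → h i = X p.1 - 1) := by
    intro i
    rcases hform i with ⟨k, l, hkl, hi⟩ | ⟨k, hi⟩
    · refine ⟨(k, some l), ?_, ?_⟩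
      · rintro l' hl'
        obtain rfl : l = l' := Option.some.inj hl'
        exact ⟨hkl, hi⟩
      · intro hn; simp at hn
    · exact ⟨(k, none), fun l' hl' => by simp at hl', fun _ => hi⟩
  choose spec hspec1 hspec2 using hspec
  set kf : Fin d → Fin s := fun i => (spec i).1 with hkfdef
  set lf : Fin d → Option (Fin s) := fun i => (spec i).2 with hlfdef
  have hkmem : ∀ i, kf i ∈ (h i).vars := by
    intro i
    cases hli : lf i with
    | none => rw [hspec2 i hli]; exact memvars_sub_one (kf i)
    | some l =>
      obtain ⟨hne, hi⟩ := hspec1 i l hli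
      rw [hi]; exact memvars_sub_left hne
  have hlmem : ∀ i l, lf i = some l → l ∈ (h i).vars := by
    intro i l hli
    obtain ⟨hne, hi⟩ := hspec1 i l hli
    rw [hi]; exact memvars_sub_right hne
  have hkinj : Function.Injective kf := by
    intro i j hij
    by_contra hne
    exact (Finset.disjoint_left.mp (hdisj i j hne)) (hkmem i) (hij ▸ hkmem j)
  have hlnotrange : ∀ i l, lf i = some l → ¬ ∃ i', kf i' = l := by
    rintro i l hli ⟨i', hi'⟩
    by_cases hcase : i' = i
    · subst hcase; exact (hspec1 i' l hli).1 hi'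
    · exact (Finset.disjoint_left.mp (hdisj i' i hcase)) (hi' ▸ hkmem i') (hlmem i l hli)
  have hds : d ≤ s := by
    have := Fintype.card_le_of_injective kf hkinj
    simpa using this
  -- evaluation of each factor
  have heval : ∀ (P : Fin s → K) (i : Fin d), eval P (h i) =
      (lf i).elim (P (kf i) - 1) (fun l => P (kf i) - P l) := by
    intro P i
    cases hli : lf i with
    | none => rw [hspec2 i hli]; simp; rfl
    | some l => rw [(hspec1 i l hli).2]; simp; rfl
  set K₀ := {a : K // a ≠ 0} with hK₀def
  set A := {a : K // a ≠ 0 ∧ a ≠ 1} with hAdef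
  set B := {j : Fin s // ¬ ∃ i, kf i = j} with hBdef
  set N : Set (Torus s K) := {P | ∀ i, eval P.1 (h i) ≠ 0} with hNdef
  -- the extension of a `B`-indexed vector to all of `Fin s`
  set bfun : (B → K₀) → (Fin s → K) :=
    fun b j => if hj : ∃ i, kf i = j then 1 else (b ⟨j, hj⟩).1 with hbfundef
  have hbfun_notin : ∀ (b : B → K₀) (j : Fin s) (hj : ¬ ∃ i, kf i = j),
      bfun b j = (b ⟨j, hj⟩).1 := fun b j hj => dif_neg hj
  -- the bijection
  have key : ∃ g : (Fin d → A) × (B → K₀) → N, Function.Bijective g := by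
    have torus_prop : ∀ (a : Fin d → A) (b : B → K₀) (j : Fin s),
        buildP kf lf (fun i => (a i).1) (bfun b) j ≠ 0 := by
      intro a b j
      by_cases hj : ∃ i, kf i = j
      · obtain ⟨i, rfl⟩ := hj
        rw [buildP_kf hkinj]
        cases hli : lf i with
        | none => simpa using (a i).2.1
        | some l =>
          have hlr := hlnotrange i l hli
          simp only [Option.elim]
          exact mul_ne_zero (a i).2.1
            (by rw [hbfun_notin b l hlr]; exact (b ⟨l, hlr⟩).2)
      · rw [buildP_notin hj, hbfun_notin b j hj]; exact (b ⟨j, hj⟩).2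
    have eval_prop : ∀ (a : Fin d → A) (b : B → K₀) (i : Fin d),
        eval (buildP kf lf (fun i => (a i).1) (bfun b)) (h i) ≠ 0 := by
      intro a b i
      rw [heval]
      cases hli : lf i with
      | none =>
        rw [buildP_kf hkinj, hli]
        simp only [Option.elim]
        exact fun hc => (a i).2.2 (sub_eq_zero.mp hc)
      | some l =>
        have hlr := hlnotrange i l hli
        have hPk : buildP kf lf (fun i => (a i).1) (bfun b) (kf i)
            = (a i).1 * (b ⟨l, hlr⟩).1 := by
          rw [buildP_kf hkinj, hli]
          simp only [Option.elim]
          rw [hbfun_notin b l hlr]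
        have hPl : buildP kf lf (fun i => (a i).1) (bfun b) l = (b ⟨l, hlr⟩).1 := by
          rw [buildP_notin hlr, hbfun_notin b l hlr]
        simp only [Option.elim]
        rw [hPk, hPl]
        intro hc
        have h1 : (a i).1 * (b ⟨l, hlr⟩).1 = (b ⟨l, hlr⟩).1 := sub_eq_zero.mp hc
        have h2 : (a i).1 * (b ⟨l, hlr⟩).1 = 1 * (b ⟨l, hlr⟩).1 := by rw [one_mul]; exact h1
        exact (a i).2.2 (mul_right_cancel₀ (b ⟨l, hlr⟩).2 h2)
    refine ⟨fun ab => ⟨⟨buildP kf lf (fun i => (ab.1 i).1) (bfun ab.2),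
        torus_prop ab.1 ab.2⟩, fun i => eval_prop ab.1 ab.2 i⟩, ?_, ?_⟩
    · -- injective
      rintro ⟨a, b⟩ ⟨a', b'⟩ hgg
      have hfun : buildP kf lf (fun i => (a i).1) (bfun b)
          = buildP kf lf (fun i => (a' i).1) (bfun b') := congrArg (fun x => x.1.1) hgg
      have hb : b = b' := by
        funext j
        apply Subtype.ext
        have := congrFun hfun j.1
        rw [buildP_notin j.2, buildP_notin j.2, hbfun_notin b j.1 j.2,
          hbfun_notin b' j.1 j.2] at this
        simpa using this
      have ha : a = a' := by
        funext i
        apply Subtype.ext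
        have hthis := congrFun hfun (kf i)
        rw [buildP_kf hkinj, buildP_kf hkinj] at hthis
        cases hli : lf i with
        | none => rw [hli] at hthis; simpa using hthis
        | some l =>
          have hlr := hlnotrange i l hli
          rw [hli] at hthis
          simp only [Option.elim] at hthis
          rw [hbfun_notin b l hlr, hbfun_notin b' l hlr, hb] at hthis
          exact mul_right_cancel₀ (b' ⟨l, hlr⟩).2 hthis
      rw [ha, hb]
    · -- surjective
      rintro ⟨⟨P, hP⟩, hPN⟩
      have hPN' : ∀ i, eval P (h i) ≠ 0 := hPN
      have haprop : ∀ i : Fin d,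
          ((lf i).elim (P (kf i)) (fun l => P (kf i) * (P l)⁻¹)) ≠ 0 ∧
          ((lf i).elim (P (kf i)) (fun l => P (kf i) * (P l)⁻¹)) ≠ 1 := by
        intro i
        have hev := hPN' i
        rw [heval] at hev
        cases hli : lf i with
        | none =>
          rw [hli] at hev
          simp only [Option.elim] at hev
          simp only [Option.elim]
          exact ⟨hP (kf i), fun hc => hev (by rw [hc, sub_self])⟩
        | some l =>
          rw [hli] at hev
          simp only [Option.elim] at hev
          simp only [Option.elim]
          refine ⟨mul_ne_zero (hP _) (inv_ne_zero (hP l)), fun hc => hev ?_⟩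
          rw [sub_eq_zero]
          exact (mul_inv_eq_one₀ (hP l)).mp hc
      refine ⟨⟨fun i => ⟨_, haprop i⟩, fun j => ⟨P j.1, hP j.1⟩⟩, ?_⟩
      apply Subtype.ext
      apply Subtype.ext
      funext j
      show buildP kf lf
          (fun i => (lf i).elim (P (kf i)) (fun l => P (kf i) * (P l)⁻¹))
          (bfun (fun j => ⟨P j.1, hP j.1⟩)) j = P j
      by_cases hj : ∃ i, kf i = j
      · obtain ⟨i, rfl⟩ := hj
        rw [buildP_kf hkinj]
        cases hli : lf i with
        | none => simp only [Option.elim]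
        | some l =>
          have hlr := hlnotrange i l hli
          simp only [Option.elim]
          have hbl : bfun (fun j => ⟨P j.1, hP j.1⟩) l = P l :=
            hbfun_notin (fun j => ⟨P j.1, hP j.1⟩) l hlr
          rw [hbl]
          exact inv_mul_cancel_right₀ (hP l) _
      · rw [buildP_notin hj]
        exact hbfun_notin (fun j => ⟨P j.1, hP j.1⟩) j hj
  obtain ⟨g, hg⟩ := key
  have hcard : Nat.card ((Fin d → A) × (B → K₀)) = Nat.card N :=
    Nat.card_eq_of_bijective g hg
  -- cardinalities
  have hK0card : Nat.card K₀ = q - 1 := by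
    rw [hK₀def, Nat.card_eq_fintype_card, Fintype.card_subtype]
    have he : (Finset.univ.filter fun a : K => a ≠ 0) = Finset.univ \ {0} := by
      ext a; simp
    rw [he, Finset.card_sdiff_of_subset (Finset.subset_univ _), Finset.card_univ, hK,
      Finset.card_singleton]
  have hAcard : Nat.card A = q - 2 := by
    rw [hAdef, Nat.card_eq_fintype_card, Fintype.card_subtype]
    have he : (Finset.univ.filter fun a : K => a ≠ 0 ∧ a ≠ 1)
        = Finset.univ \ {0, 1} := by
      ext a; simp
    rw [he, Finset.card_sdiff_of_subset (Finset.subset_univ _), Finset.card_univ, hK]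
    norm_num
  have hBcard : Nat.card B = s - d := by
    have hr : (Set.range kf).ncard = d := by
      rw [← Nat.card_coe_set_eq, Nat.card_range_of_injective hkinj,
        Nat.card_eq_fintype_card, Fintype.card_fin]
    have hc : Nat.card B = ((Set.range kf)ᶜ).ncard := by
      rw [← Nat.card_coe_set_eq]
      exact Nat.card_congr (Equiv.subtypeEquivRight
        (by intro x; simp [Set.mem_compl_iff, Set.mem_range]))
    have htot := Set.ncard_add_ncard_compl (Set.range kf)
    rw [Nat.card_eq_fintype_card, Fintype.card_fin] at htot
    rw [hc]
    omega
  have hNcard : N.ncard = (q - 2) ^ d * (q - 1) ^ (s - d) := by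
    rw [← Nat.card_coe_set_eq, ← hcard, Nat.card_prod, Nat.card_fun, Nat.card_fun,
      hAcard, hK0card, hBcard, Nat.card_eq_fintype_card, Fintype.card_fin]
  have hTcard : Nat.card (Torus s K) = (q - 1) ^ s := by
    have e : Torus s K ≃ (Fin s → {a : K // a ≠ 0}) :=
      Equiv.subtypePiEquivPi (p := fun (_ : Fin s) (b : K) => b ≠ 0)
    have h0 : Nat.card {a : K // a ≠ 0} = q - 1 := hK0card
    rw [Nat.card_congr e, Nat.card_fun, Nat.card_eq_fintype_card (α := Fin s),
      Fintype.card_fin, h0]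
  have hZ : {P : Torus s K | eval P.1 (∏ i, h i) = 0} = Nᶜ := by
    ext P
    simp only [Set.mem_setOf_eq, Set.mem_compl_iff, hNdef]
    rw [map_prod, Finset.prod_eq_zero_iff]
    simp
  rw [hZ]
  have htot := Set.ncard_add_ncard_compl N
  rw [hTcard, hNcard] at htot
  omega
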